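/- Suppose all reported variances are equal: Vᵢ = v for a scalar v > 0 and all i. Set c = (npz − nz + n − p·r1·z + √D)/(2z(np + (1−p)r2)), b0 = (1/v)·((p/(1−p))(n + r1/c) + 1 + 1/c), and a0 = c·b0. Then a0 > 0, b0 > 0, v − 1/a0 − 1/b0 > 0, the pair (a0, b0) satisfies the Hamling odds-ratio system, and it is the unique pair with a0 > 0, b0 > 0 and v − 1/a0 − 1/b0 > 0 satisfying that system. -/

import Mathlib

open Finset

/-- The Hamling odds-ratio system of nonlinear equations in the unknowns `(a0, b0)`. -/
def hamlingORSystem (n : ℕ) (V R : Fin n → ℝ) (p z : ℝ) (a0 b0 : ℝ) : Prop :=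
  ((1 - p) / p) * b0 = ∑ i, (1 + b0 / (a0 * R i)) / (V i - 1 / a0 - 1 / b0) ∧
  b0 / (z * p) - a0 = ∑ i, (1 + a0 * R i / b0) / (V i - 1 / a0 - 1 / b0)

set_option maxHeartbeats 4000000 in
/-- Equivariant case of the Hamling odds-ratio problem (all variances equal to `v > 0`):
the explicitly given pair `(a0, b0)` is positive, feasible, solves the Hamling system,
and is the unique positive feasible solution. -/
theorem hamlingOR_equivariant
    (n : ℕ) (hn : 1 ≤ n) (V R : Fin n → ℝ) (hR : ∀ i, 0 < R i)
    (v : ℝ) (hv : 0 < v) (hV : ∀ i, V i = v)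
    (p z : ℝ) (hp0 : 0 < p) (hp1 : p < 1) (hz : 0 < z)
    (r1 r2 D c b0 a0 : ℝ)
    (hr1 : r1 = ∑ i, (R i)⁻¹) (hr2 : r2 = ∑ i, R i)
    (hD : D = (n : ℝ) ^ 2 * p ^ 2 * z ^ 2 - 2 * (n : ℝ) ^ 2 * p * z ^ 2
      + 2 * (n : ℝ) ^ 2 * p * z + (n : ℝ) ^ 2 * z ^ 2 - 2 * (n : ℝ) ^ 2 * z + (n : ℝ) ^ 2
      - 2 * (n : ℝ) * p ^ 2 * r1 * z ^ 2 + 2 * (n : ℝ) * p * r1 * z ^ 2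
      + 2 * (n : ℝ) * p * r1 * z + p ^ 2 * r1 ^ 2 * z ^ 2
      - 4 * p * r1 * r2 * z + 4 * r1 * r2 * z)
    (hc : c = ((n : ℝ) * p * z - (n : ℝ) * z + (n : ℝ) - p * r1 * z + Real.sqrt D)
      / (2 * z * ((n : ℝ) * p + (1 - p) * r2)))
    (hb0 : b0 = (1 / v) * ((p / (1 - p)) * ((n : ℝ) + r1 / c) + 1 + 1 / c))
    (ha0 : a0 = c * b0) :
    0 < a0 ∧ 0 < b0 ∧ 0 < v - 1 / a0 - 1 / b0 ∧
      hamlingORSystem n V R p z a0 b0 ∧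
      ∀ a0' b0' : ℝ, 0 < a0' → 0 < b0' → 0 < v - 1 / a0' - 1 / b0' →
        hamlingORSystem n V R p z a0' b0' → a0' = a0 ∧ b0' = b0 := by
  have h1p : (0:ℝ) < 1 - p := by linarith
  have hn1 : (1:ℝ) ≤ (n:ℝ) := by exact_mod_cast hn
  have hne : (Finset.univ : Finset (Fin n)).Nonempty := ⟨⟨0, hn⟩, Finset.mem_univ _⟩
  have hr1pos : 0 < r1 := by
    rw [hr1]; exact Finset.sum_pos (fun i _ => inv_pos.2 (hR i)) hne
  have hr2pos : 0 < r2 := by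
    rw [hr2]; exact Finset.sum_pos (fun i _ => hR i) hne
  obtain ⟨A, hAdef⟩ : ∃ A : ℝ, A = z * ((n:ℝ)*p + (1-p)*r2) := ⟨_, rfl⟩
  obtain ⟨B, hBdef⟩ : ∃ B : ℝ, B = (n:ℝ)*z - (n:ℝ)*p*z - (n:ℝ) + p*r1*z := ⟨_, rfl⟩
  have hnpos : (0:ℝ) < (n:ℝ) := lt_of_lt_of_le one_pos hn1
  have h1pne : (1:ℝ) - p ≠ 0 := ne_of_gt h1p
  have hApos : 0 < A := by
    rw [hAdef]
    apply mul_pos hz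
    nlinarith [mul_pos h1p hr2pos, mul_pos hp0 hnpos]
  have hDeq : D = B^2 + 4*A*r1 := by rw [hD, hAdef, hBdef]; ring
  have hD0 : 0 ≤ D := by nlinarith [sq_nonneg B, mul_pos hApos hr1pos]
  have hs2 : Real.sqrt D ^ 2 = D := Real.sq_sqrt hD0
  have hsnn : 0 ≤ Real.sqrt D := Real.sqrt_nonneg D
  have hX : ((n:ℝ)*p + (1-p)*r2) ≠ 0 := by
    have : 0 < (n:ℝ)*p + (1-p)*r2 := by positivity
    exact ne_of_gt this
  have hc2 : 2*A*c = Real.sqrt D - B := by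
    rw [hc, hAdef, hBdef]
    field_simp
    ring
  have hB2 : B^2 < D := by
    have h4 : 0 < A*r1 := mul_pos hApos hr1pos
    clear hD hc hb0 ha0 hr1 hr2 hV hR hAdef hBdef hs2
    nlinarith [hDeq]
  have hsB : B < Real.sqrt D := by
    rcases le_or_gt 0 B with hB | hB
    · exact (Real.lt_sqrt hB).mpr hB2
    · exact lt_of_lt_of_le hB hsnn
  have hcpos : 0 < c := by
    clear hD hDeq hc hb0 ha0 hr1 hr2 hV hR hAdef hBdef hs2 hB2
    nlinarith [hc2, hsB, hApos]
  have hcne : c ≠ 0 := ne_of_gt hcpos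
  have hquad : A*c^2 + B*c = r1 := by
    have h4 : (2*A*c)^2 = (Real.sqrt D - B)^2 := by rw [hc2]
    have h0 : 4*A*(A*c^2 + B*c - r1) = 0 := by
      linear_combination h4 + (2*B)*hc2 + hs2 + hDeq
    have h4A : (4:ℝ)*A ≠ 0 := by positivity
    have := (mul_eq_zero.mp h0).resolve_left h4A
    linarith
  have hb0' : v*(1-p)*c*b0 = p*((n:ℝ)*c + r1) + (1-p)*(c+1) := by
    rw [hb0]
    set_option maxHeartbeats 1000000 in field_simp [hv.ne', hcne, h1pne]
    ring
  have hrhs : 0 < p*((n:ℝ)*c + r1) + (1-p)*(c+1) := by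
    clear hD hc hb0 hDeq hB2 hc2 hb0' hs2 hAdef hBdef hr1 hr2 hV hR ha0
    nlinarith [mul_pos hp0 hcpos, mul_pos hp0 hr1pos, mul_pos h1p hcpos, mul_pos (mul_pos hp0 hnpos) hcpos]
  have hlc : 0 < v*(1-p)*c := by positivity
  have hb0pos : 0 < b0 := by
    have heq : b0 = (p*((n:ℝ)*c + r1) + (1-p)*(c+1)) / (v*(1-p)*c) := by
      rw [eq_div_iff (ne_of_gt hlc)]; linear_combination hb0'
    rw [heq]; exact div_pos hrhs hlc
  have ha0pos : 0 < a0 := by rw [ha0]; positivity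
  have ha0ne : a0 ≠ 0 := ne_of_gt ha0pos
  have hb0ne : b0 ≠ 0 := ne_of_gt hb0pos
  -- feasibility
  have hS : v - 1/a0 - 1/b0 = (p*((n:ℝ)*c + r1))/((1-p)*c*b0) := by
    rw [ha0]
    field_simp [hcne, hb0ne, h1pne]
    linear_combination hb0'
  have hSpos : 0 < v - 1/a0 - 1/b0 := by
    rw [hS]
    apply div_pos
    · nlinarith [mul_pos hp0 hcpos, mul_pos hp0 hr1pos]
    · positivity
  have hSne : v - 1/a0 - 1/b0 ≠ 0 := ne_of_gt hSpos
  -- sum simplification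
  have hsum1 : ∀ a b : ℝ, a ≠ 0 →
      (∑ i, (1 + b/(a * R i)) / (V i - 1/a - 1/b)) = ((n:ℝ) + b/a*r1)/(v - 1/a - 1/b) := by
    intro a b ha
    have h1 : ∀ i : Fin n, (1 + b/(a*R i))/(V i - 1/a - 1/b)
        = (1 + b/a*(R i)⁻¹)/(v - 1/a - 1/b) := by
      intro i; rw [hV i, div_mul_eq_div_div, div_eq_mul_inv (b/a)]
    simp_rw [h1]
    rw [← Finset.sum_div, Finset.sum_add_distrib, Finset.sum_const, Finset.card_univ,
      Fintype.card_fin, ← Finset.mul_sum, ← hr1, nsmul_eq_mul, mul_one]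
  have hsum2 : ∀ a b : ℝ, b ≠ 0 →
      (∑ i, (1 + a * R i / b) / (V i - 1/a - 1/b)) = ((n:ℝ) + a/b*r2)/(v - 1/a - 1/b) := by
    intro a b hb
    have h1 : ∀ i : Fin n, (1 + a*R i/b)/(V i - 1/a - 1/b)
        = (1 + a/b*(R i))/(v - 1/a - 1/b) := by
      intro i; rw [hV i, mul_div_right_comm]
    simp_rw [h1]
    rw [← Finset.sum_div, Finset.sum_add_distrib, Finset.sum_const, Finset.card_univ,
      Fintype.card_fin, ← Finset.mul_sum, ← hr2, nsmul_eq_mul, mul_one]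
  refine ⟨ha0pos, hb0pos, hSpos, ⟨?_, ?_⟩, ?_⟩
  · -- first equation
    rw [hsum1 a0 b0 ha0ne, eq_div_iff hSne]
    rw [ha0]
    field_simp [hcne, hb0ne, hp0.ne']
    linear_combination hb0'
  · -- second equation
    rw [hsum2 a0 b0 hb0ne, eq_div_iff hSne]
    rw [ha0]
    field_simp [hcne, hb0ne, hp0.ne', hz.ne']
    have h2 : (1-p) * ((1 - z*p*c) * (b0*c*v - 1 - c))
        = (1-p) * (z*p*c*((n:ℝ) + c*r2)) := by
      linear_combination ((1 - z*p*c))*hb0' - (p)*hquad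
        + (p*c^2)*hAdef + (p*c)*hBdef
    exact mul_left_cancel₀ h1pne h2
  · -- uniqueness
    intro a b ha hb hSab ⟨he1, he2⟩
    clear hD hc hb0 hDeq hc2 hs2 hsB hsnn hD0 hB2 hrhs hlc
    rw [hsum1 a b (ne_of_gt ha)] at he1
    rw [hsum2 a b (ne_of_gt hb)] at he2
    rw [eq_div_iff (ne_of_gt hSab)] at he1 he2
    have hane : a ≠ 0 := ne_of_gt ha
    have hbne : b ≠ 0 := ne_of_gt hb
    field_simp [hp0.ne', hz.ne'] at he1 he2
    have hP1 : v*(1-p)*a*b = p*((n:ℝ)*a + r1*b) + (1-p)*(a+b) := by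
      have h' : (a*b) * (v*(1-p)*a*b) = (a*b) * (p*((n:ℝ)*a + r1*b) + (1-p)*(a+b)) := by
        linear_combination (a*b)*he1
      exact mul_left_cancel₀ (mul_ne_zero hane hbne) h'
    have hT : p*b*((a - c*b)*(A*(a + c*b) + B*b)) = 0 := by
      linear_combination (b*(b - z*p*a))*hP1 - (1-p)*b*he2 + (p*b*a^2)*hAdef
        + (p*b*a*b)*hBdef - (p*b^3)*hquad
    have hT0 : (a - c*b)*(A*(a + c*b) + B*b) = 0 :=
      (mul_eq_zero.mp hT).resolve_left (mul_ne_zero hp0.ne' hbne)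
    have hacb : a = c*b := by
      rcases mul_eq_zero.mp hT0 with h | h
      · linarith [sub_eq_zero.mp h]
      · exfalso
        have hca : A*c*a + r1*b = 0 := by linear_combination c*h - b*hquad
        have h1 : 0 < A*c*a := mul_pos (mul_pos hApos hcpos) ha
        have h2' : 0 < r1*b := mul_pos hr1pos hb
        linarith
    have h3 : v*(1-p)*c*b*(b - b0) = 0 := by
      linear_combination hP1 - (v*(1-p)*b - p*(n:ℝ) - (1-p))*hacb - b*hb0'
    have hnz : v*(1-p)*c*b ≠ 0 := by positivity
    have hbb : b = b0 := by
      have := (mul_eq_zero.mp h3).resolve_left hnz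
      linarith
    refine ⟨?_, hbb⟩
    rw [hacb, hbb, ha0]
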